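/- Let A be a real 3×3 matrix satisfying the Demazure equations 2 A Aᵀ A − trace(A Aᵀ) A = 0 and A ≠ 0. Then A is an essential matrix, i.e., there exist t ∈ ℝ³ and R ∈ SO(3) with A = [t]_× R. -/

import Mathlib

open Matrix

lemma mat_ext3 {X Y : Matrix (Fin 3) (Fin 3) ℝ}
    (h00 : X 0 0 = Y 0 0) (h01 : X 0 1 = Y 0 1) (h02 : X 0 2 = Y 0 2)
    (h10 : X 1 0 = Y 1 0) (h11 : X 1 1 = Y 1 1) (h12 : X 1 2 = Y 1 2)
    (h20 : X 2 0 = Y 2 0) (h21 : X 2 1 = Y 2 1) (h22 : X 2 2 = Y 2 2) : X = Y := by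
  ext i j
  fin_cases i <;> fin_cases j <;> assumption

lemma vec_ext3 {x y : Fin 3 → ℝ} (h0 : x 0 = y 0) (h1 : x 1 = y 1) (h2 : x 2 = y 2) :
    x = y := by
  funext i; fin_cases i <;> assumption

/-- The skew-symmetric cross-product matrix `[t]ₓ` of `t ∈ ℝ³`. -/
def crossMat (t : Fin 3 → ℝ) : Matrix (Fin 3) (Fin 3) ℝ :=
  !![0, -t 2, t 1; t 2, 0, -t 0; -t 1, t 0, 0]

lemma vmv_transpose (a b : Fin 3 → ℝ) : (vecMulVec a b)ᵀ = vecMulVec b a := by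
  ext i j; simp [vecMulVec_apply, transpose_apply, mul_comm]

lemma mul_vmv (X : Matrix (Fin 3) (Fin 3) ℝ) (a b : Fin 3 → ℝ) :
    X * vecMulVec a b = vecMulVec (X *ᵥ a) b := by
  ext i j
  simp [mul_apply, vecMulVec_apply, mulVec, dotProduct, Fin.sum_univ_three]
  ring

lemma vmv_mul (a b : Fin 3 → ℝ) (X : Matrix (Fin 3) (Fin 3) ℝ) :
    vecMulVec a b * X = vecMulVec a (b ᵥ* X) := by
  ext i j
  simp [mul_apply, vecMulVec_apply, vecMul, dotProduct, Fin.sum_univ_three]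
  ring

lemma vmv_vmv (a b u w : Fin 3 → ℝ) :
    vecMulVec a b * vecMulVec u w = (b ⬝ᵥ u) • vecMulVec a w := by
  ext i j
  simp [mul_apply, vecMulVec_apply, dotProduct, Fin.sum_univ_three]
  ring

lemma vmv_zero_left (b : Fin 3 → ℝ) : vecMulVec (0 : Fin 3 → ℝ) b = 0 := by
  ext i j; simp [vecMulVec_apply]

lemma vmv_zero_right (a : Fin 3 → ℝ) : vecMulVec a (0 : Fin 3 → ℝ) = 0 := by
  ext i j; simp [vecMulVec_apply]

lemma vmv_neg_left (a b : Fin 3 → ℝ) : vecMulVec (-a) b = -vecMulVec a b := by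
  ext i j; simp [vecMulVec_apply]

lemma vmv_neg_right (a b : Fin 3 → ℝ) : vecMulVec a (-b) = -vecMulVec a b := by
  ext i j; simp [vecMulVec_apply]

lemma crossMat_transpose (t : Fin 3 → ℝ) : (crossMat t)ᵀ = -crossMat t := by
  apply mat_ext3 <;> simp [crossMat, transpose_apply, neg_apply]

lemma crossMat_mulVec_self (t : Fin 3 → ℝ) : crossMat t *ᵥ t = 0 := by
  apply vec_ext3 <;>
    (simp [crossMat, mulVec, dotProduct, Fin.sum_univ_three]; ring)

lemma crossMat_sq (t : Fin 3 → ℝ) (c : ℝ) (h : t 0 * t 0 + t 1 * t 1 + t 2 * t 2 = c) :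
    crossMat t * crossMat t = vecMulVec t t - c • 1 := by
  apply mat_ext3 <;>
    simp [crossMat, mul_apply, Fin.sum_univ_three, vecMulVec_apply, one_apply] <;>
    (first | ring1 | linear_combination h | linear_combination -h)

lemma det_crossMat (t : Fin 3 → ℝ) : (crossMat t).det = 0 := by
  simp [crossMat, det_fin_three]; ring

lemma det_add_vmv (B : Matrix (Fin 3) (Fin 3) ℝ) (t v : Fin 3 → ℝ) :
    (B + vecMulVec t v).det + (B - vecMulVec t v).det = 2 * B.det := by
  simp [det_fin_three, vecMulVec_apply, Matrix.add_apply, Matrix.sub_apply]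
  ring

set_option maxHeartbeats 1000000 in
lemma extract3 (c : ℝ) (hc : 0 < c) (P : Matrix (Fin 3) (Fin 3) ℝ)
    (hsym : Pᵀ = P) (hP : P * P = c • P) (htr : P.trace = c) :
    ∃ w : Fin 3 → ℝ, P = vecMulVec w w := by
  have hs01 : P 1 0 = P 0 1 := by
    have := congrFun (congrFun hsym 1) 0; simpa [transpose_apply] using this.symm
  have hs02 : P 2 0 = P 0 2 := by
    have := congrFun (congrFun hsym 2) 0; simpa [transpose_apply] using this.symm
  have hs12 : P 2 1 = P 1 2 := by
    have := congrFun (congrFun hsym 2) 1; simpa [transpose_apply] using this.symm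
  have E : ∀ i j, P i 0 * P 0 j + P i 1 * P 1 j + P i 2 * P 2 j = c * P i j := by
    intro i j
    have := congrFun (congrFun hP i) j
    simpa [Matrix.mul_apply, Fin.sum_univ_three, Matrix.smul_apply] using this
  have E0 := E 0 0; have E1 := E 0 1; have E2 := E 0 2
  have E3 := E 1 1; have E4 := E 1 2; have E5 := E 2 2
  simp only [hs01, hs02, hs12] at E0 E1 E2 E3 E4 E5
  have E6 : P 0 0 + P 1 1 + P 2 2 = c := by
    simpa [Matrix.trace, Matrix.diag, Fin.sum_univ_three] using htr
  have m6 : P 0 1 * P 2 2 = P 0 2 * P 1 2 := by linear_combination P 0 1 * E6 - E1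
  have m5 : P 0 2 * P 1 1 = P 0 1 * P 1 2 := by linear_combination P 0 2 * E6 - E2
  have m4 : P 0 0 * P 1 2 = P 0 1 * P 0 2 := by linear_combination P 1 2 * E6 - E4
  have m3 : P 1 1 * P 2 2 = P 1 2 * P 1 2 := by
    linear_combination (E0 - P 0 0 * E6) - (1/2) * (E0 + E3 + E5 - (P 0 0 + P 1 1 + P 2 2) * E6)
  have m1 : P 0 0 * P 1 1 = P 0 1 * P 0 1 := by
    linear_combination (E5 - P 2 2 * E6) - (1/2) * (E0 + E3 + E5 - (P 0 0 + P 1 1 + P 2 2) * E6)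
  have m2 : P 0 0 * P 2 2 = P 0 2 * P 0 2 := by
    linear_combination (E3 - P 1 1 * E6) - (1/2) * (E0 + E3 + E5 - (P 0 0 + P 1 1 + P 2 2) * E6)
  have hda : 0 ≤ P 0 0 := by nlinarith [sq_nonneg (P 0 1), sq_nonneg (P 0 2)]
  have hde : 0 ≤ P 1 1 := by nlinarith [sq_nonneg (P 0 1), sq_nonneg (P 1 2)]
  have hdg : 0 ≤ P 2 2 := by nlinarith [sq_nonneg (P 0 2), sq_nonneg (P 1 2)]
  have key : ∀ w : Fin 3 → ℝ, w 0 * w 0 = P 0 0 → w 0 * w 1 = P 0 1 → w 0 * w 2 = P 0 2 →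
      w 1 * w 1 = P 1 1 → w 1 * w 2 = P 1 2 → w 2 * w 2 = P 2 2 → P = vecMulVec w w := by
    intro w h00 h01 h02 h11 h12 h22
    ext i j
    fin_cases i <;> fin_cases j <;> simp only [vecMulVec_apply]
    · exact h00.symm
    · exact h01.symm
    · exact h02.symm
    · exact hs01.trans (h01.symm.trans (mul_comm (w 0) (w 1)))
    · exact h11.symm
    · exact h12.symm
    · exact hs02.trans (h02.symm.trans (mul_comm (w 0) (w 2)))
    · exact hs12.trans (h12.symm.trans (mul_comm (w 1) (w 2)))
    · exact h22.symm
  rcases lt_or_eq_of_le hda with hpa | hpa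
  · set s := Real.sqrt (P 0 0) with hsdef
    have hs2 : s * s = P 0 0 := Real.mul_self_sqrt hda
    have hs0 : s ≠ 0 := by positivity
    refine ⟨![s, P 0 1 / s, P 0 2 / s], key _ hs2 ?_ ?_ ?_ ?_ ?_⟩ <;>
        simp only [Matrix.cons_val_zero, Matrix.cons_val_one, Matrix.head_cons,
          Matrix.cons_val_two, Matrix.tail_cons]
    · field_simp
    · field_simp
    · field_simp
      first
        | linear_combination -m1 - P 1 1 * hs2
        | linear_combination m1 + P 1 1 * hs2
    · field_simp
      first
        | linear_combination -m4 - P 1 2 * hs2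
        | linear_combination m4 + P 1 2 * hs2
    · field_simp
      first
        | linear_combination -m2 - P 2 2 * hs2
        | linear_combination m2 + P 2 2 * hs2
  · rcases lt_or_eq_of_le hde with hpe | hpe
    · set s := Real.sqrt (P 1 1) with hsdef
      have hs2 : s * s = P 1 1 := Real.mul_self_sqrt hde
      have hs0 : s ≠ 0 := by positivity
      refine ⟨![P 0 1 / s, s, P 1 2 / s], key _ ?_ ?_ ?_ hs2 ?_ ?_⟩ <;>
          simp only [Matrix.cons_val_zero, Matrix.cons_val_one, Matrix.head_cons,
            Matrix.cons_val_two, Matrix.tail_cons]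
      · field_simp
        first
          | linear_combination -m1 - P 0 0 * hs2
          | linear_combination m1 + P 0 0 * hs2
      · field_simp
      · field_simp
        first
          | linear_combination -m5 - P 0 2 * hs2
          | linear_combination m5 + P 0 2 * hs2
      · field_simp
      · field_simp
        first
          | linear_combination -m3 - P 2 2 * hs2
          | linear_combination m3 + P 2 2 * hs2
    · have hpg : 0 < P 2 2 := by nlinarith [E6]
      set s := Real.sqrt (P 2 2) with hsdef
      have hs2 : s * s = P 2 2 := Real.mul_self_sqrt hdg
      have hs0 : s ≠ 0 := by positivity
      refine ⟨![P 0 2 / s, P 1 2 / s, s], key _ ?_ ?_ ?_ ?_ ?_ hs2⟩ <;>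
          simp only [Matrix.cons_val_zero, Matrix.cons_val_one, Matrix.head_cons,
            Matrix.cons_val_two, Matrix.tail_cons]
      · field_simp
        first
          | linear_combination -m2 - P 0 0 * hs2
          | linear_combination m2 + P 0 0 * hs2
      · field_simp
        first
          | linear_combination -m6 - P 0 1 * hs2
          | linear_combination m6 + P 0 1 * hs2
      · field_simp
      · field_simp
        first
          | linear_combination -m3 - P 1 1 * hs2
          | linear_combination m3 + P 1 1 * hs2
      · field_simp

set_option maxHeartbeats 1000000 in
/-- A nonzero real 3×3 matrix satisfying the Demazure equations is an
essential matrix: `A = [t]ₓ R` for some `t ∈ ℝ³` and `R ∈ SO(3)`. -/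
theorem demazure_implies_essential (A : Matrix (Fin 3) (Fin 3) ℝ)
    (hDem : (2 : ℝ) • (A * Aᵀ * A) - (A * Aᵀ).trace • A = 0) (hA : A ≠ 0) :
    ∃ (t : Fin 3 → ℝ) (R : Matrix (Fin 3) (Fin 3) ℝ),
      R * Rᵀ = 1 ∧ R.det = 1 ∧ A = crossMat t * R := by
  set c : ℝ := (A * Aᵀ).trace / 2 with hc_def
  have htr_expand : (A * Aᵀ).trace =
      A 0 0^2 + A 0 1^2 + A 0 2^2 + A 1 0^2 + A 1 1^2 + A 1 2^2
        + A 2 0^2 + A 2 1^2 + A 2 2^2 := by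
    simp [Matrix.trace, Matrix.diag, mul_apply, Fin.sum_univ_three, transpose_apply]
    ring
  have hApos : 0 < (A * Aᵀ).trace := by
    rcases lt_or_eq_of_le (show (0:ℝ) ≤ (A * Aᵀ).trace by rw [htr_expand]; positivity)
      with h | h
    · exact h
    · exfalso
      apply hA
      have h9 := htr_expand.symm.trans h.symm
      apply mat_ext3 <;> (simp only [Matrix.zero_apply]; refine sq_eq_zero_iff.mp ?_) <;>
        linarith [h9, sq_nonneg (A 0 0), sq_nonneg (A 0 1), sq_nonneg (A 0 2),
          sq_nonneg (A 1 0), sq_nonneg (A 1 1), sq_nonneg (A 1 2),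
          sq_nonneg (A 2 0), sq_nonneg (A 2 1), sq_nonneg (A 2 2)]
  have hc : 0 < c := by rw [hc_def]; positivity
  have hcne : c ≠ 0 := ne_of_gt hc
  have h1 : A * Aᵀ * A = c • A := by
    have h2 : (2:ℝ) • (A * Aᵀ * A) = (A * Aᵀ).trace • A := sub_eq_zero.mp hDem
    have h3 : (2:ℝ) • (A * Aᵀ * A) = (2:ℝ) • (c • A) := by
      rw [h2, smul_smul]
      congr 1
      rw [hc_def]; ring
    exact smul_right_injective (Matrix (Fin 3) (Fin 3) ℝ) (two_ne_zero) h3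
  have hSS : (A * Aᵀ) * (A * Aᵀ) = c • (A * Aᵀ) := by
    calc (A * Aᵀ) * (A * Aᵀ) = (A * Aᵀ * A) * Aᵀ := (Matrix.mul_assoc (A * Aᵀ) A Aᵀ).symm
    _ = (c • A) * Aᵀ := by rw [h1]
    _ = c • (A * Aᵀ) := by rw [smul_mul_assoc]
  have htrS : (A * Aᵀ).trace = 2 * c := by rw [hc_def]; ring
  -- the matrix M
  have hMsym : (c • (1:Matrix (Fin 3) (Fin 3) ℝ) - A * Aᵀ)ᵀ = c • 1 - A * Aᵀ := by
    simp [transpose_sub, transpose_smul, transpose_mul]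
  have hMM : (c • (1:Matrix (Fin 3) (Fin 3) ℝ) - A * Aᵀ) * (c • 1 - A * Aᵀ)
      = c • (c • 1 - A * Aᵀ) := by
    rw [mul_sub, sub_mul, sub_mul, hSS]
    simp only [smul_mul_assoc, mul_smul_comm, Matrix.one_mul, Matrix.mul_one, smul_sub]
    abel
  have htrM : (c • (1:Matrix (Fin 3) (Fin 3) ℝ) - A * Aᵀ).trace = c := by
    simp [trace_sub, trace_smul, trace_one, htrS, smul_eq_mul]
    ring
  obtain ⟨t, hMt⟩ := extract3 c hc _ hMsym hMM htrM
  have hS : A * Aᵀ = c • 1 - vecMulVec t t := by rw [← hMt, sub_sub_cancel]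
  have htt : t 0 * t 0 + t 1 * t 1 + t 2 * t 2 = c := by
    have h := htrM
    rw [hMt] at h
    simpa [Matrix.trace, Matrix.diag, vecMulVec_apply, Fin.sum_univ_three] using h
  -- the matrix N
  have hNsym : (c • (1:Matrix (Fin 3) (Fin 3) ℝ) - Aᵀ * A)ᵀ = c • 1 - Aᵀ * A := by
    simp [transpose_sub, transpose_smul, transpose_mul]
  have hNN' : (Aᵀ * A) * (Aᵀ * A) = c • (Aᵀ * A) := by
    calc (Aᵀ * A) * (Aᵀ * A) = Aᵀ * (A * Aᵀ * A) := by
          rw [Matrix.mul_assoc Aᵀ A (Aᵀ * A), Matrix.mul_assoc A Aᵀ A]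
    _ = Aᵀ * (c • A) := by rw [h1]
    _ = c • (Aᵀ * A) := by rw [mul_smul_comm]
  have hNN : (c • (1:Matrix (Fin 3) (Fin 3) ℝ) - Aᵀ * A) * (c • 1 - Aᵀ * A)
      = c • (c • 1 - Aᵀ * A) := by
    rw [mul_sub, sub_mul, sub_mul, hNN']
    simp only [smul_mul_assoc, mul_smul_comm, Matrix.one_mul, Matrix.mul_one, smul_sub]
    abel
  have htrN : (c • (1:Matrix (Fin 3) (Fin 3) ℝ) - Aᵀ * A).trace = c := by
    simp [trace_sub, trace_smul, trace_one, trace_mul_comm Aᵀ A, htrS, smul_eq_mul]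
    ring
  obtain ⟨v, hNv⟩ := extract3 c hc _ hNsym hNN htrN
  have hN : Aᵀ * A = c • 1 - vecMulVec v v := by rw [← hNv, sub_sub_cancel]
  have hvv : v 0 * v 0 + v 1 * v 1 + v 2 * v 2 = c := by
    have h := htrN
    rw [hNv] at h
    simpa [Matrix.trace, Matrix.diag, vecMulVec_apply, Fin.sum_univ_three] using h
  have hvvd : v ⬝ᵥ v = c := by simpa [dotProduct, Fin.sum_univ_three] using hvv
  -- entry equations for A * Aᵀ
  have E00 : A 0 0 * A 0 0 + A 0 1 * A 0 1 + A 0 2 * A 0 2 = c - t 0 * t 0 := by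
    have h := congrFun (congrFun hS 0) 0
    simpa [mul_apply, transpose_apply, Fin.sum_univ_three, vecMulVec_apply, one_apply] using h
  have E01 : A 0 0 * A 1 0 + A 0 1 * A 1 1 + A 0 2 * A 1 2 = -(t 0 * t 1) := by
    have h := congrFun (congrFun hS 0) 1
    simpa [mul_apply, transpose_apply, Fin.sum_univ_three, vecMulVec_apply, one_apply] using h
  have E02 : A 0 0 * A 2 0 + A 0 1 * A 2 1 + A 0 2 * A 2 2 = -(t 0 * t 2) := by
    have h := congrFun (congrFun hS 0) 2
    simpa [mul_apply, transpose_apply, Fin.sum_univ_three, vecMulVec_apply, one_apply] using h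
  have E11 : A 1 0 * A 1 0 + A 1 1 * A 1 1 + A 1 2 * A 1 2 = c - t 1 * t 1 := by
    have h := congrFun (congrFun hS 1) 1
    simpa [mul_apply, transpose_apply, Fin.sum_univ_three, vecMulVec_apply, one_apply] using h
  have E12 : A 1 0 * A 2 0 + A 1 1 * A 2 1 + A 1 2 * A 2 2 = -(t 1 * t 2) := by
    have h := congrFun (congrFun hS 1) 2
    simpa [mul_apply, transpose_apply, Fin.sum_univ_three, vecMulVec_apply, one_apply] using h
  have E22 : A 2 0 * A 2 0 + A 2 1 * A 2 1 + A 2 2 * A 2 2 = c - t 2 * t 2 := by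
    have h := congrFun (congrFun hS 2) 2
    simpa [mul_apply, transpose_apply, Fin.sum_univ_three, vecMulVec_apply, one_apply] using h
  have key : (t 0 * A 0 0 + t 1 * A 1 0 + t 2 * A 2 0)^2
      + (t 0 * A 0 1 + t 1 * A 1 1 + t 2 * A 2 1)^2
      + (t 0 * A 0 2 + t 1 * A 1 2 + t 2 * A 2 2)^2 = 0 := by
    linear_combination (t 0 * t 0) * E00 + (2 * (t 0 * t 1)) * E01 + (2 * (t 0 * t 2)) * E02
      + (t 1 * t 1) * E11 + (2 * (t 1 * t 2)) * E12 + (t 2 * t 2) * E22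
      - (t 0 * t 0 + t 1 * t 1 + t 2 * t 2) * htt
  have hu0 : t 0 * A 0 0 + t 1 * A 1 0 + t 2 * A 2 0 = 0 := by
    refine sq_eq_zero_iff.mp ?_
    linarith [sq_nonneg (t 0 * A 0 0 + t 1 * A 1 0 + t 2 * A 2 0), sq_nonneg (t 0 * A 0 1 + t 1 * A 1 1 + t 2 * A 2 1), sq_nonneg (t 0 * A 0 2 + t 1 * A 1 2 + t 2 * A 2 2), key]
  have hu1 : t 0 * A 0 1 + t 1 * A 1 1 + t 2 * A 2 1 = 0 := by
    refine sq_eq_zero_iff.mp ?_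
    linarith [sq_nonneg (t 0 * A 0 1 + t 1 * A 1 1 + t 2 * A 2 1), sq_nonneg (t 0 * A 0 0 + t 1 * A 1 0 + t 2 * A 2 0), sq_nonneg (t 0 * A 0 2 + t 1 * A 1 2 + t 2 * A 2 2), key]
  have hu2 : t 0 * A 0 2 + t 1 * A 1 2 + t 2 * A 2 2 = 0 := by
    refine sq_eq_zero_iff.mp ?_
    linarith [sq_nonneg (t 0 * A 0 2 + t 1 * A 1 2 + t 2 * A 2 2), sq_nonneg (t 0 * A 0 0 + t 1 * A 1 0 + t 2 * A 2 0), sq_nonneg (t 0 * A 0 1 + t 1 * A 1 1 + t 2 * A 2 1), key]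
  have hTtA : vecMulVec t t * A = 0 := by
    apply mat_ext3 <;>
      simp only [mul_apply, vecMulVec_apply, Fin.sum_univ_three, Matrix.zero_apply] <;>
      (first
        | linear_combination t 0 * hu0 | linear_combination t 0 * hu1
        | linear_combination t 0 * hu2 | linear_combination t 1 * hu0
        | linear_combination t 1 * hu1 | linear_combination t 1 * hu2
        | linear_combination t 2 * hu0 | linear_combination t 2 * hu1
        | linear_combination t 2 * hu2)
  -- entry equations for Aᵀ * A
  have F00 : A 0 0 * A 0 0 + A 1 0 * A 1 0 + A 2 0 * A 2 0 = c - v 0 * v 0 := by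
    have h := congrFun (congrFun hN 0) 0
    simpa [mul_apply, transpose_apply, Fin.sum_univ_three, vecMulVec_apply, one_apply] using h
  have F01 : A 0 0 * A 0 1 + A 1 0 * A 1 1 + A 2 0 * A 2 1 = -(v 0 * v 1) := by
    have h := congrFun (congrFun hN 0) 1
    simpa [mul_apply, transpose_apply, Fin.sum_univ_three, vecMulVec_apply, one_apply] using h
  have F02 : A 0 0 * A 0 2 + A 1 0 * A 1 2 + A 2 0 * A 2 2 = -(v 0 * v 2) := by
    have h := congrFun (congrFun hN 0) 2
    simpa [mul_apply, transpose_apply, Fin.sum_univ_three, vecMulVec_apply, one_apply] using h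
  have F11 : A 0 1 * A 0 1 + A 1 1 * A 1 1 + A 2 1 * A 2 1 = c - v 1 * v 1 := by
    have h := congrFun (congrFun hN 1) 1
    simpa [mul_apply, transpose_apply, Fin.sum_univ_three, vecMulVec_apply, one_apply] using h
  have F12 : A 0 1 * A 0 2 + A 1 1 * A 1 2 + A 2 1 * A 2 2 = -(v 1 * v 2) := by
    have h := congrFun (congrFun hN 1) 2
    simpa [mul_apply, transpose_apply, Fin.sum_univ_three, vecMulVec_apply, one_apply] using h
  have F22 : A 0 2 * A 0 2 + A 1 2 * A 1 2 + A 2 2 * A 2 2 = c - v 2 * v 2 := by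
    have h := congrFun (congrFun hN 2) 2
    simpa [mul_apply, transpose_apply, Fin.sum_univ_three, vecMulVec_apply, one_apply] using h
  have key2 : (A 0 0 * v 0 + A 0 1 * v 1 + A 0 2 * v 2)^2
      + (A 1 0 * v 0 + A 1 1 * v 1 + A 1 2 * v 2)^2
      + (A 2 0 * v 0 + A 2 1 * v 1 + A 2 2 * v 2)^2 = 0 := by
    linear_combination (v 0 * v 0) * F00 + (2 * (v 0 * v 1)) * F01 + (2 * (v 0 * v 2)) * F02
      + (v 1 * v 1) * F11 + (2 * (v 1 * v 2)) * F12 + (v 2 * v 2) * F22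
      - (v 0 * v 0 + v 1 * v 1 + v 2 * v 2) * hvv
  have hw0 : A 0 0 * v 0 + A 0 1 * v 1 + A 0 2 * v 2 = 0 := by
    refine sq_eq_zero_iff.mp ?_
    linarith [sq_nonneg (A 0 0 * v 0 + A 0 1 * v 1 + A 0 2 * v 2), sq_nonneg (A 1 0 * v 0 + A 1 1 * v 1 + A 1 2 * v 2), sq_nonneg (A 2 0 * v 0 + A 2 1 * v 1 + A 2 2 * v 2), key2]
  have hw1 : A 1 0 * v 0 + A 1 1 * v 1 + A 1 2 * v 2 = 0 := by
    refine sq_eq_zero_iff.mp ?_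
    linarith [sq_nonneg (A 1 0 * v 0 + A 1 1 * v 1 + A 1 2 * v 2), sq_nonneg (A 0 0 * v 0 + A 0 1 * v 1 + A 0 2 * v 2), sq_nonneg (A 2 0 * v 0 + A 2 1 * v 1 + A 2 2 * v 2), key2]
  have hw2 : A 2 0 * v 0 + A 2 1 * v 1 + A 2 2 * v 2 = 0 := by
    refine sq_eq_zero_iff.mp ?_
    linarith [sq_nonneg (A 2 0 * v 0 + A 2 1 * v 1 + A 2 2 * v 2), sq_nonneg (A 0 0 * v 0 + A 0 1 * v 1 + A 0 2 * v 2), sq_nonneg (A 1 0 * v 0 + A 1 1 * v 1 + A 1 2 * v 2), key2]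
  have hAvt : A * vecMulVec v t = 0 := by
    apply mat_ext3 <;>
      simp only [mul_apply, vecMulVec_apply, Fin.sum_univ_three, Matrix.zero_apply] <;>
      (first
        | linear_combination t 0 * hw0 | linear_combination t 0 * hw1
        | linear_combination t 0 * hw2 | linear_combination t 1 * hw0
        | linear_combination t 1 * hw1 | linear_combination t 1 * hw2
        | linear_combination t 2 * hw0 | linear_combination t 2 * hw1
        | linear_combination t 2 * hw2)
  -- cross-product matrix facts
  have F1 : crossMat t * crossMat t = vecMulVec t t - c • 1 := crossMat_sq t c htt
  have F2 : ∀ x : Fin 3 → ℝ, crossMat t * vecMulVec t x = 0 := fun x => by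
    rw [mul_vmv, crossMat_mulVec_self, vmv_zero_left]
  -- the main construction
  have main : ∀ w : Fin 3 → ℝ, w ⬝ᵥ w = c → A * vecMulVec w t = 0 →
      (c⁻¹ • (vecMulVec t w - crossMat t * A)) *
        (c⁻¹ • (vecMulVec t w - crossMat t * A))ᵀ = 1
      ∧ A = crossMat t * (c⁻¹ • (vecMulVec t w - crossMat t * A)) := by
    intro w hww hw
    have hXZ : vecMulVec t w * vecMulVec w t = c • vecMulVec t t := by
      rw [vmv_vmv, hww]
    have hXW : vecMulVec t w * Aᵀ = 0 := by
      have h := congrArg Matrix.transpose hw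
      simpa [transpose_mul, vmv_transpose] using h
    have hYZ : crossMat t * A * vecMulVec w t = 0 := by
      rw [Matrix.mul_assoc, hw, Matrix.mul_zero]
    have hYW : crossMat t * A * (Aᵀ * crossMat t)
        = c • vecMulVec t t - (c*c) • 1 := by
      rw [← Matrix.mul_assoc, Matrix.mul_assoc (crossMat t) A Aᵀ, hS, mul_sub,
        mul_smul_comm, Matrix.mul_one, F2 t, sub_mul, smul_mul_assoc, F1,
        Matrix.zero_mul, smul_sub, smul_smul]
      abel
    have hprod : (vecMulVec t w - crossMat t * A) * (vecMulVec w t + Aᵀ * crossMat t)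
        = (c*c) • 1 := by
      rw [sub_mul, mul_add, mul_add, hXZ,
        ← Matrix.mul_assoc (vecMulVec t w) Aᵀ (crossMat t), hXW, Matrix.zero_mul,
        hYZ, hYW]
      abel
    have hTrans : (c⁻¹ • (vecMulVec t w - crossMat t * A))ᵀ
        = c⁻¹ • (vecMulVec w t + Aᵀ * crossMat t) := by
      rw [transpose_smul, transpose_sub, vmv_transpose, transpose_mul,
        crossMat_transpose, mul_neg, sub_neg_eq_add]
    constructor
    · rw [hTrans, smul_mul_assoc, mul_smul_comm, smul_smul, hprod, smul_smul,
        (show c⁻¹ * c⁻¹ * (c * c) = 1 by field_simp), one_smul]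
    · have hTR : crossMat t * (vecMulVec t w - crossMat t * A) = c • A := by
        rw [mul_sub, F2 w, ← Matrix.mul_assoc, F1, sub_mul, hTtA, smul_mul_assoc,
          Matrix.one_mul]
        abel
      rw [mul_smul_comm, hTR, smul_smul, inv_mul_cancel₀ hcne, one_smul]
  have hmain_v := main v hvvd hAvt
  have hnegA : A * vecMulVec (-v) t = 0 := by
    rw [vmv_neg_left, mul_neg, hAvt, neg_zero]
  have hnegd : (-v) ⬝ᵥ (-v) = c := by
    simpa [neg_dotProduct, dotProduct_neg] using hvvd
  have hmain_nv := main (-v) hnegd hnegA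
  have hd : (c⁻¹ • (vecMulVec t v - crossMat t * A)).det
      * (c⁻¹ • (vecMulVec t v - crossMat t * A)).det = 1 := by
    have h := congrArg Matrix.det hmain_v.1
    rwa [det_mul, det_transpose, det_one] at h
  have hsum : (c⁻¹ • (vecMulVec t v - crossMat t * A)).det
      + (c⁻¹ • (vecMulVec t (-v) - crossMat t * A)).det = 0 := by
    have e1 : vecMulVec t v - crossMat t * A
        = (-(crossMat t * A)) + vecMulVec t v := by abel
    have e2 : vecMulVec t (-v) - crossMat t * A
        = (-(crossMat t * A)) - vecMulVec t v := by
      rw [vmv_neg_right]; abel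
    have hB : (-(crossMat t * A)).det = 0 := by
      rw [det_neg, det_mul, det_crossMat]; ring
    rw [det_smul, det_smul, e1, e2, ← mul_add, det_add_vmv, hB]
    ring
  rcases mul_self_eq_one_iff.mp hd with h | h
  · exact ⟨t, _, hmain_v.1, h, hmain_v.2⟩
  · have h2 : (c⁻¹ • (vecMulVec t (-v) - crossMat t * A)).det = 1 := by
      rw [h] at hsum; linarith
    exact ⟨t, _, hmain_nv.1, h2, hmain_nv.2⟩
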